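/- arXiv:1403.4687 — 4 statements merged into one kernel-verified Lean document; each statement's English description precedes it below -/
import Mathlib

section
/- For any two positive semi-definite operators M and N on a finite-dimensional Hilbert space, the trace-norm distance and fidelity satisfy ‖M − N‖₁² + 4‖√M √N‖₁² ≤ (Tr M + Tr N)². -/
open ComplexOrder
/-- The square root of a positive semi-definite matrix (Mathlib's former `Matrix.PosSemidef.sqrt`). -/
noncomputable def Matrix.PosSemidef.sqrt {n 𝕜 : Type*} [Fintype n] [DecidableEq n] [RCLike 𝕜]
    {A : Matrix n n 𝕜} (hA : A.PosSemidef) : Matrix n n 𝕜 :=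
  hA.1.eigenvectorUnitary.1 * Matrix.diagonal ((↑) ∘ Real.sqrt ∘ hA.1.eigenvalues) *
    (star hA.1.eigenvectorUnitary : Matrix n n 𝕜)
/-- Trace norm ‖A‖₁ = Tr √(AᴴA). -/
noncomputable def traceNorm {n : Type*} [Fintype n] [DecidableEq n]
    (A : Matrix n n ℂ) : ℝ :=
  ((Matrix.posSemidef_conjTranspose_mul_self A).sqrt.trace).re

lemma Matrix.PosSemidef.posSemidef_sqrt {n 𝕜 : Type*} [Fintype n] [DecidableEq n] [RCLike 𝕜]
    {A : Matrix n n 𝕜} (hA : A.PosSemidef) : hA.sqrt.PosSemidef := by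
  unfold Matrix.PosSemidef.sqrt
  rw [Matrix.star_eq_conjTranspose]
  apply Matrix.PosSemidef.mul_mul_conjTranspose_same
  rw [Matrix.posSemidef_diagonal_iff]
  intro i
  exact RCLike.ofReal_nonneg.mpr (Real.sqrt_nonneg _)
lemma Matrix.PosSemidef.sqrt_mul_self {n 𝕜 : Type*} [Fintype n] [DecidableEq n] [RCLike 𝕜]
    {A : Matrix n n 𝕜} (hA : A.PosSemidef) : hA.sqrt * hA.sqrt = A := by
  have hs := hA.1.spectral_theorem
  unfold Matrix.PosSemidef.sqrt
  have hUU : (star hA.1.eigenvectorUnitary : Matrix n n 𝕜) * hA.1.eigenvectorUnitary.1 = 1 :=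
    Unitary.coe_star_mul_self _
  simp only [Matrix.mul_assoc]
  rw [← Matrix.mul_assoc (star hA.1.eigenvectorUnitary : Matrix n n 𝕜), hUU, Matrix.one_mul,
    ← Matrix.mul_assoc (Matrix.diagonal _), Matrix.diagonal_mul_diagonal]
  conv_rhs => rw [hs]
  rw [Unitary.conjStarAlgAut_apply, Matrix.mul_assoc]
  congr 3
  funext i
  simp only [Function.comp_apply]
  rw [← RCLike.ofReal_mul, Real.mul_self_sqrt (hA.eigenvalues_nonneg i)]

section TraceNormAux

set_option linter.unusedSectionVars false

open Matrix

variable {n : Type*} [Fintype n] [DecidableEq n]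


/-- Polar decomposition: any square complex matrix factors as a unitary times
the positive square root of `Xᴴ * X`. -/
lemma exists_unitary_polar (X : Matrix n n ℂ) :
    ∃ W : Matrix n n ℂ, W ∈ Matrix.unitaryGroup n ℂ ∧
      X = W * (Matrix.posSemidef_conjTranspose_mul_self X).sqrt := by
  have hC := Matrix.posSemidef_conjTranspose_mul_self X
  have hH : (Xᴴ * X).IsHermitian := hC.1
  set V : Matrix n n ℂ := (hH.eigenvectorUnitary : Matrix n n ℂ) with hVdef
  set d : n → ℝ := hH.eigenvalues with hddef
  have hd : ∀ i, 0 ≤ d i := hC.eigenvalues_nonneg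
  set s : n → ℝ := fun i => Real.sqrt (d i) with hsdef
  set Dg : Matrix n n ℂ := Matrix.diagonal (fun i => (s i : ℂ)) with hDgdef
  have hVV : Vᴴ * V = 1 := by
    rw [← Matrix.star_eq_conjTranspose]
    exact Matrix.mem_unitaryGroup_iff'.mp hH.eigenvectorUnitary.2
  have hVV' : V * Vᴴ = 1 := by
    rw [← Matrix.star_eq_conjTranspose]
    exact Matrix.mem_unitaryGroup_iff.mp hH.eigenvectorUnitary.2
  have hsqrt : hC.sqrt = V * Dg * Vᴴ := by
    rw [Matrix.PosSemidef.sqrt, hDgdef, Matrix.star_eq_conjTranspose]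
    rfl
  -- Y = X * V has orthogonal columns
  set Y : Matrix n n ℂ := X * V with hYdef
  have hYY : Yᴴ * Y = Matrix.diagonal (fun i => (d i : ℂ)) := by
    have hspec := hH.spectral_theorem
    rw [hYdef, Matrix.conjTranspose_mul]
    calc Vᴴ * Xᴴ * (X * V) = Vᴴ * (Xᴴ * X) * V := by
          rw [Matrix.mul_assoc, Matrix.mul_assoc, Matrix.mul_assoc]
      _ = Vᴴ * (V * Matrix.diagonal (fun i => (d i : ℂ)) * Vᴴ) * V := by
          rw [hspec, Unitary.conjStarAlgAut_apply, Matrix.star_eq_conjTranspose]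
          rfl
      _ = Matrix.diagonal (fun i => (d i : ℂ)) := by
          rw [Matrix.mul_assoc, Matrix.mul_assoc, hVV]
          rw [Matrix.mul_one, ← Matrix.mul_assoc, hVV, Matrix.one_mul]
  have hcol : ∀ i j, (∑ k, (starRingEnd ℂ) (Y k i) * Y k j)
      = Matrix.diagonal (fun i => (d i : ℂ)) i j := by
    intro i j
    rw [← hYY, Matrix.mul_apply]
    simp [Matrix.conjTranspose_apply]
  set v : n → EuclideanSpace ℂ n := fun i => WithLp.toLp 2 (fun k => Y k i / (s i : ℂ)) with hvdef
  have hs_sq : ∀ i, (s i : ℂ) * (s i : ℂ) = (d i : ℂ) := by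
    intro i
    rw [← Complex.ofReal_mul, Real.mul_self_sqrt (hd i)]
  have horth : Orthonormal ℂ (Set.restrict {i | d i ≠ 0} v) := by
    rw [orthonormal_iff_ite]
    rintro ⟨i, hi⟩ ⟨j, hj⟩
    have hinner : inner ℂ (v i) (v j)
        = (∑ k, (starRingEnd ℂ) (Y k i) * Y k j) / ((s i : ℂ) * (s j : ℂ)) := by
      rw [Finset.sum_div]
      simp only [PiLp.inner_apply, RCLike.inner_apply]
      refine Finset.sum_congr rfl fun k _ => ?_
      show (Y k j / (s j : ℂ)) * (starRingEnd ℂ) (Y k i / (s i : ℂ)) = _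
      rw [map_div₀, Complex.conj_ofReal]
      ring
    by_cases hij : (⟨i, hi⟩ : {i | d i ≠ 0}) = ⟨j, hj⟩
    · have hij' : i = j := congrArg Subtype.val hij
      subst hij'
      simp only [hij, if_pos]
      show inner ℂ (v i) (v i) = 1
      rw [hinner, hcol, Matrix.diagonal_apply_eq, hs_sq]
      exact div_self (by exact_mod_cast hi)
    · have hij' : i ≠ j := fun h => hij (Subtype.ext h)
      simp only [hij, if_neg, if_false]
      show inner ℂ (v i) (v j) = 0
      rw [hinner, hcol, Matrix.diagonal_apply_ne _ hij', zero_div]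
  obtain ⟨b, hb⟩ := horth.exists_orthonormalBasis_extension_of_card_eq
    (finrank_euclideanSpace (𝕜 := ℂ) (ι := n))
  set U : Matrix n n ℂ := Matrix.of (fun k i => b i k) with hUdef
  have hUU : Uᴴ * U = 1 := by
    ext i j
    rw [Matrix.mul_apply, Matrix.one_apply]
    have hbo := orthonormal_iff_ite.mp b.orthonormal i j
    rw [← hbo]
    simp [PiLp.inner_apply, RCLike.inner_apply, Matrix.conjTranspose_apply, hUdef]
    exact Finset.sum_congr rfl fun _ _ => mul_comm _ _
  have hYU : Y = U * Dg := by
    ext k j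
    rw [hDgdef, Matrix.mul_diagonal]
    by_cases hj : d j = 0
    · have hY0 : Y k j = 0 := by
        have h1 : (∑ l, (starRingEnd ℂ) (Y l j) * Y l j) = 0 := by
          rw [hcol j j, Matrix.diagonal_apply_eq, hj, Complex.ofReal_zero]
        have h1' : ((∑ l, (‖Y l j‖ ^ 2 : ℝ) : ℝ) : ℂ) = 0 := by
          rw [Complex.ofReal_sum]
          rw [← h1]
          refine Finset.sum_congr rfl fun l _ => ?_
          rw [RCLike.conj_mul]
          norm_num
        have h2 : (∑ l, (‖Y l j‖ ^ 2 : ℝ)) = 0 := by exact_mod_cast h1'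
        have h3 := (Finset.sum_eq_zero_iff_of_nonneg
          (fun l _ => sq_nonneg (‖Y l j‖))).mp h2 k (Finset.mem_univ k)
        have := pow_eq_zero_iff (n := 2) (by norm_num) |>.mp h3
        exact norm_eq_zero.mp this
      have hsj : (s j : ℂ) = 0 := by
        simp [hsdef, hj]
      rw [hY0, hsj, mul_zero]
    · have hbv : b j = v j := hb j hj
      have hsj : (s j : ℂ) ≠ 0 := by
        simp only [ne_eq, Complex.ofReal_eq_zero, hsdef]
        exact Real.sqrt_ne_zero'.mpr (lt_of_le_of_ne (hd j) (Ne.symm hj))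
      show Y k j = U k j * (s j : ℂ)
      rw [hUdef]
      show Y k j = b j k * (s j : ℂ)
      rw [hbv]
      show Y k j = (Y k j / (s j : ℂ)) * (s j : ℂ)
      field_simp
  have hU : U ∈ Matrix.unitaryGroup n ℂ := by
    rw [Matrix.mem_unitaryGroup_iff', Matrix.star_eq_conjTranspose]
    exact hUU
  refine ⟨U * Vᴴ, ?_, ?_⟩
  · have hVmem : Vᴴ ∈ Matrix.unitaryGroup n ℂ := by
      rw [← Matrix.star_eq_conjTranspose]
      exact Unitary.star_mem hH.eigenvectorUnitary.2
    exact Submonoid.mul_mem _ hU hVmem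
  · rw [hsqrt]
    calc X = X * (V * Vᴴ) := by rw [hVV', Matrix.mul_one]
      _ = Y * Vᴴ := by rw [hYdef, Matrix.mul_assoc]
      _ = U * Dg * Vᴴ := by rw [hYU]
      _ = U * (Vᴴ * V) * Dg * Vᴴ := by rw [hVV, Matrix.mul_one]
      _ = U * Vᴴ * (V * Dg * Vᴴ) := by
          simp only [Matrix.mul_assoc]

/-- Squared Frobenius norm (as a sum of squared entry norms). -/
noncomputable def nsq (X : Matrix n n ℂ) : ℝ := ∑ j, ∑ i, ‖X i j‖ ^ 2

lemma nsq_nonneg (X : Matrix n n ℂ) : 0 ≤ nsq X :=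
  Finset.sum_nonneg fun _ _ => Finset.sum_nonneg fun _ _ => sq_nonneg _

lemma trace_conjTranspose_mul (X : Matrix n n ℂ) :
    (Xᴴ * X).trace = ((nsq X : ℝ) : ℂ) := by
  rw [Matrix.trace, nsq, Complex.ofReal_sum]
  refine Finset.sum_congr rfl fun j _ => ?_
  rw [Matrix.diag_apply, Matrix.mul_apply, Complex.ofReal_sum]
  refine Finset.sum_congr rfl fun i _ => ?_
  rw [Matrix.conjTranspose_apply, RCLike.star_def, RCLike.conj_mul]
  norm_num

lemma trace_conjTranspose_mul_re (X : Matrix n n ℂ) :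
    ((Xᴴ * X).trace).re = nsq X := by
  rw [trace_conjTranspose_mul, Complex.ofReal_re]

/-- Cauchy–Schwarz for the Frobenius inner product. -/
lemma cs (X Y : Matrix n n ℂ) :
    ((Xᴴ * Y).trace).re ≤ Real.sqrt (nsq X) * Real.sqrt (nsq Y) := by
  set x : EuclideanSpace ℂ (n × n) := WithLp.toLp 2 (fun p : n × n => X p.1 p.2) with hxdef
  set y : EuclideanSpace ℂ (n × n) := WithLp.toLp 2 (fun p : n × n => Y p.1 p.2) with hydef
  have htr : (Xᴴ * Y).trace = inner ℂ x y := by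
    rw [Matrix.trace, PiLp.inner_apply]
    rw [Fintype.sum_prod_type]
    rw [Finset.sum_comm]
    refine Finset.sum_congr rfl fun j _ => ?_
    rw [Matrix.diag_apply, Matrix.mul_apply]
    refine Finset.sum_congr rfl fun i _ => ?_
    rw [Matrix.conjTranspose_apply, RCLike.inner_apply, mul_comm]
    rfl
  have hsum : ∀ Z : Matrix n n ℂ, ∑ p : n × n, ‖Z p.1 p.2‖ ^ 2 = nsq Z := by
    intro Z
    rw [Fintype.sum_prod_type, nsq, Finset.sum_comm]
  have hnx : ‖x‖ = Real.sqrt (nsq X) := by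
    rw [EuclideanSpace.norm_eq, ← hsum X]
  have hny : ‖y‖ = Real.sqrt (nsq Y) := by
    rw [EuclideanSpace.norm_eq, ← hsum Y]
  calc ((Xᴴ * Y).trace).re = RCLike.re (inner ℂ x y) := by rw [htr]; rfl
    _ ≤ ‖x‖ * ‖y‖ := re_inner_le_norm x y
    _ = Real.sqrt (nsq X) * Real.sqrt (nsq Y) := by rw [hnx, hny]

lemma nsq_unitary_mul {U : Matrix n n ℂ} (hU : U * Uᴴ = 1) (C : Matrix n n ℂ) :
    nsq (Uᴴ * C) = nsq C := by
  rw [← trace_conjTranspose_mul_re, ← trace_conjTranspose_mul_re C]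
  congr 2
  rw [Matrix.conjTranspose_mul, Matrix.conjTranspose_conjTranspose]
  calc Cᴴ * U * (Uᴴ * C) = Cᴴ * (U * Uᴴ) * C := by simp only [Matrix.mul_assoc]
    _ = Cᴴ * C := by rw [hU, Matrix.mul_one]

lemma psd_trace_eq_re {P : Matrix n n ℂ} (hP : P.PosSemidef) :
    P.trace = ((P.trace.re : ℝ) : ℂ) := by
  have him : P.trace = star P.trace := by
    conv_lhs => rw [← hP.1, Matrix.trace_conjTranspose]
  have : P.trace.im = 0 := by
    have := congrArg Complex.im him
    simp only [Complex.conj_im, RCLike.star_def] at this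
    linarith
  refine Complex.ext ?_ ?_
  · simp
  · simp [this]

lemma psd_trace_re_nonneg {P : Matrix n n ℂ} (hP : P.PosSemidef) :
    0 ≤ P.trace.re := by
  have hdiag : ∀ i, 0 ≤ P i i := by
    intro i
    have h := hP.2 (Finsupp.single i 1)
    simpa [dotProduct, Pi.single_apply, apply_ite, Finsupp.sum_single_index] using h
  rw [Matrix.trace]
  rw [Complex.re_sum]
  exact Finset.sum_nonneg fun i _ => by
    have := hdiag i
    rw [Complex.le_def] at this
    simpa using this.1

end TraceNormAux

open Matrix in
/-- For PSD operators M, N: ‖M − N‖₁² + 4‖√M √N‖₁² ≤ (Tr M + Tr N)². -/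
theorem traceNorm_sq_add_four_fidelity_sq_le
    {n : Type*} [Fintype n] [DecidableEq n]
    (M N : Matrix n n ℂ) (hM : M.PosSemidef) (hN : N.PosSemidef) :
    traceNorm (M - N) ^ 2 + 4 * traceNorm (hM.sqrt * hN.sqrt) ^ 2
      ≤ (M.trace.re + N.trace.re) ^ 2 := by
  classical
  obtain ⟨W, hWmem, hWX⟩ := exists_unitary_polar (hM.sqrt * hN.sqrt)
  obtain ⟨W0, hW0mem, hW0D⟩ := exists_unitary_polar (M - N)
  set A := hM.sqrt with hAdef
  set B0 := hN.sqrt with hB0def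
  set B : Matrix n n ℂ := B0 * Wᴴ with hBdef
  set P := (Matrix.posSemidef_conjTranspose_mul_self (A * B0)).sqrt with hPdef
  set P0 := (Matrix.posSemidef_conjTranspose_mul_self (M - N)).sqrt with hP0def
  have hWW : Wᴴ * W = 1 := by
    rw [← Matrix.star_eq_conjTranspose]; exact Matrix.mem_unitaryGroup_iff'.mp hWmem
  have hWW' : W * Wᴴ = 1 := by
    rw [← Matrix.star_eq_conjTranspose]; exact Matrix.mem_unitaryGroup_iff.mp hWmem
  have hW0W0 : W0ᴴ * W0 = 1 := by
    rw [← Matrix.star_eq_conjTranspose]; exact Matrix.mem_unitaryGroup_iff'.mp hW0mem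
  have hW0W0' : W0 * W0ᴴ = 1 := by
    rw [← Matrix.star_eq_conjTranspose]; exact Matrix.mem_unitaryGroup_iff.mp hW0mem
  have hAH : Aᴴ = A := hM.posSemidef_sqrt.1
  have hB0H : B0ᴴ = B0 := hN.posSemidef_sqrt.1
  set F := traceNorm (A * B0) with hFdef
  set T := M.trace.re + N.trace.re with hTdef
  have hPpsd := (Matrix.posSemidef_conjTranspose_mul_self (A * B0)).posSemidef_sqrt
  have hP0psd := (Matrix.posSemidef_conjTranspose_mul_self (M - N)).posSemidef_sqrt
  have hPtr : P.trace = ((F : ℝ) : ℂ) := psd_trace_eq_re hPpsd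
  have hP0tr : P0.trace = ((traceNorm (M - N) : ℝ) : ℂ) := psd_trace_eq_re hP0psd
  -- trace computations
  have htrAB : (Aᴴ * B).trace = ((F : ℝ) : ℂ) := by
    have h1 : Aᴴ * B = W * P * Wᴴ := by
      rw [hAH, hBdef, ← Matrix.mul_assoc, hWX]
    rw [h1, Matrix.trace_mul_cycle, hWW, Matrix.one_mul, hPtr]
  have htrBA : (Bᴴ * A).trace = ((F : ℝ) : ℂ) := by
    have h1 : (Aᴴ * B)ᴴ = Bᴴ * A := by
      rw [Matrix.conjTranspose_mul, Matrix.conjTranspose_conjTranspose]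
    rw [← h1, Matrix.trace_conjTranspose, htrAB]
    simp
  have htrAA : (Aᴴ * A).trace = M.trace := by rw [hAH, hM.sqrt_mul_self]
  have hBB0 : B * Bᴴ = N := by
    rw [hBdef, Matrix.conjTranspose_mul, Matrix.conjTranspose_conjTranspose, hB0H]
    calc B0 * Wᴴ * (W * B0) = B0 * (Wᴴ * W) * B0 := by simp only [Matrix.mul_assoc]
      _ = B0 * B0 := by rw [hWW, Matrix.mul_one]
      _ = N := hN.sqrt_mul_self
  have htrBB : (Bᴴ * B).trace = N.trace := by
    rw [Matrix.trace_mul_comm, hBB0]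
  -- Frobenius norms of A ± B
  have hexp1 : ((A + B)ᴴ * (A + B)).trace
      = (Aᴴ * A).trace + (Bᴴ * B).trace + (Aᴴ * B).trace + (Bᴴ * A).trace := by
    rw [Matrix.conjTranspose_add, Matrix.add_mul, Matrix.mul_add, Matrix.mul_add,
      Matrix.trace_add, Matrix.trace_add, Matrix.trace_add]
    ring
  have hexp2 : ((A - B)ᴴ * (A - B)).trace
      = (Aᴴ * A).trace + (Bᴴ * B).trace - (Aᴴ * B).trace - (Bᴴ * A).trace := by
    rw [Matrix.conjTranspose_sub, Matrix.sub_mul, Matrix.mul_sub, Matrix.mul_sub,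
      Matrix.trace_sub, Matrix.trace_sub, Matrix.trace_sub]
    ring
  have ha : nsq (A + B) = T + 2 * F := by
    rw [← trace_conjTranspose_mul_re, hexp1, htrAA, htrBB, htrAB, htrBA]
    simp only [Complex.add_re, Complex.ofReal_re, hTdef]
    ring
  have hb : nsq (A - B) = T - 2 * F := by
    rw [← trace_conjTranspose_mul_re, hexp2, htrAA, htrBB, htrAB, htrBA]
    simp only [Complex.sub_re, Complex.add_re, Complex.ofReal_re, hTdef]
    ring
  -- the key algebraic identity
  have hAA0 : A * Aᴴ = M := by rw [hAH, hM.sqrt_mul_self]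
  have hkey : (A + B) * (A - B)ᴴ + (A - B) * (A + B)ᴴ = (M - N) + (M - N) := by
    rw [← hAA0, ← hBB0, Matrix.conjTranspose_add, Matrix.conjTranspose_sub]
    noncomm_ring
  -- trace norm of the difference via the polar unitary
  have htnD : (W0ᴴ * (M - N)).trace = ((traceNorm (M - N) : ℝ) : ℂ) := by
    have h1 : W0ᴴ * (M - N) = P0 := by
      rw [hW0D, ← Matrix.mul_assoc, hW0W0, Matrix.one_mul]
    rw [h1, hP0tr]
  -- Cauchy–Schwarz bounds
  have hbound : ∀ C E : Matrix n n ℂ, ((W0ᴴ * (C * Eᴴ)).trace).re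
      ≤ Real.sqrt (nsq E) * Real.sqrt (nsq C) := by
    intro C E
    have h1 : W0ᴴ * (C * Eᴴ) = (W0ᴴ * C) * Eᴴ := by rw [Matrix.mul_assoc]
    rw [h1, Matrix.trace_mul_comm]
    calc ((Eᴴ * (W0ᴴ * C)).trace).re
        ≤ Real.sqrt (nsq E) * Real.sqrt (nsq (W0ᴴ * C)) := cs E (W0ᴴ * C)
      _ = Real.sqrt (nsq E) * Real.sqrt (nsq C) := by rw [nsq_unitary_mul hW0W0' C]
  have hmain : 2 * traceNorm (M - N)
      ≤ Real.sqrt (nsq (A - B)) * Real.sqrt (nsq (A + B))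
        + Real.sqrt (nsq (A + B)) * Real.sqrt (nsq (A - B)) := by
    have h2 : (W0ᴴ * ((M - N) + (M - N))).trace
        = (W0ᴴ * ((A + B) * (A - B)ᴴ)).trace + (W0ᴴ * ((A - B) * (A + B)ᴴ)).trace := by
      rw [← Matrix.trace_add, ← Matrix.mul_add, hkey]
    have h3 : (W0ᴴ * ((M - N) + (M - N))).trace
        = (((2 * traceNorm (M - N) : ℝ)) : ℂ) := by
      rw [Matrix.mul_add, Matrix.trace_add, htnD]
      push_cast
      ring
    have h6 := congrArg Complex.re (h3.symm.trans h2)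
    rw [Complex.add_re, Complex.ofReal_re] at h6
    rw [h6]
    exact add_le_add (hbound (A + B) (A - B)) (hbound (A - B) (A + B))
  -- squaring
  have htnn : 0 ≤ traceNorm (M - N) := psd_trace_re_nonneg hP0psd
  have hD_le : traceNorm (M - N) ≤ Real.sqrt (nsq (A + B)) * Real.sqrt (nsq (A - B)) := by
    nlinarith [hmain]
  have hsq : traceNorm (M - N) ^ 2 ≤ nsq (A + B) * nsq (A - B) := by
    have h5 : (Real.sqrt (nsq (A + B)) * Real.sqrt (nsq (A - B))) ^ 2
        = nsq (A + B) * nsq (A - B) := by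
      rw [mul_pow, Real.sq_sqrt (nsq_nonneg _), Real.sq_sqrt (nsq_nonneg _)]
    calc traceNorm (M - N) ^ 2
        ≤ (Real.sqrt (nsq (A + B)) * Real.sqrt (nsq (A - B))) ^ 2 :=
          pow_le_pow_left₀ htnn hD_le 2
      _ = nsq (A + B) * nsq (A - B) := h5
  rw [ha, hb] at hsq
  nlinarith [hsq]
end

section
/- Equivalence of WPDR and min-max EUR for predictability and visibility: for a qubit state ρ with 𝒫 = |Tr(σ_Z ρ)| and 𝒱 = max_{W∈XY} |Tr(σ_W ρ)|, the inequality H_min(Z) + min_{W∈XY} H_max(W) ≥ 1 holds if and only if 𝒫² + 𝒱² ≤ 1. -/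
open ComplexOrder

noncomputable def sigmaZ : Matrix (Fin 2) (Fin 2) ℂ := !![1, 0; 0, -1]

/-- σ_W for phase φ in the XY plane. -/
noncomputable def sigmaW (φ : ℝ) : Matrix (Fin 2) (Fin 2) ℂ :=
  !![0, Complex.exp (-(Complex.I * φ)); Complex.exp (Complex.I * φ), 0]

/-- Equivalence of the min–max EUR (in the form
H_min(Z) = −log₂((1+𝒫)/2), min H_max(W) = log₂(1+√(1−𝒱²))) and the WPDR 𝒫²+𝒱²≤1. -/
theorem eur_iff_wpdr
    (ρ : Matrix (Fin 2) (Fin 2) ℂ) (hρ : ρ.PosSemidef) (htr : ρ.trace = 1) :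
    (-Real.logb 2 ((1 + ‖(sigmaZ * ρ).trace‖) / 2)
        + Real.logb 2 (1 + Real.sqrt (1 -
            (sSup {x : ℝ | ∃ φ : ℝ, x = ‖(sigmaW φ * ρ).trace‖}) ^ 2)) ≥ 1)
      ↔ (‖(sigmaZ * ρ).trace‖) ^ 2
          + (sSup {x : ℝ | ∃ φ : ℝ, x = ‖(sigmaW φ * ρ).trace‖}) ^ 2 ≤ 1 := by
  classical
  have hH := hρ.1
  -- diagonal entries are nonnegative reals
  have hdiag : ∀ i, 0 ≤ ρ i i := by
    intro i
    have h := hρ.dotProduct_mulVec_nonneg (Pi.single i 1)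
    simpa [dotProduct, Matrix.mulVec, Fin.sum_univ_two, Pi.single_apply] using h
  have ha0 : 0 ≤ ρ 0 0 := hdiag 0
  have hd0 : 0 ≤ ρ 1 1 := hdiag 1
  have haim : (ρ 0 0).im = 0 := ((Complex.le_def.mp ha0).2).symm
  have hdim : (ρ 1 1).im = 0 := ((Complex.le_def.mp hd0).2).symm
  have hare : 0 ≤ (ρ 0 0).re := (Complex.le_def.mp ha0).1
  have hdre : 0 ≤ (ρ 1 1).re := (Complex.le_def.mp hd0).1
  have hconj : ρ 0 1 = star (ρ 1 0) := (hH.apply 0 1).symm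
  -- trace condition in real terms
  have htr2 : ρ 0 0 + ρ 1 1 = 1 := by
    simpa [Matrix.trace_fin_two] using htr
  have htrre : (ρ 0 0).re + (ρ 1 1).re = 1 := by
    have := congrArg Complex.re htr2
    simpa using this
  -- determinant nonnegativity : |b|^2 ≤ a*d
  have hdet : ρ.det = ((∏ i, hH.eigenvalues i : ℝ) : ℂ) := by
    rw [hH.det_eq_prod_eigenvalues]; push_cast; rfl
  have hdetre : 0 ≤ (ρ.det).re := by
    rw [hdet]
    have hp : (0:ℝ) ≤ ∏ i, hH.eigenvalues i :=
      Finset.prod_nonneg (fun i _ => hρ.eigenvalues_nonneg i)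
    simpa [Fin.prod_univ_two] using hp
  have hdet2 : ρ.det = ρ 0 0 * ρ 1 1 - star (ρ 1 0) * ρ 1 0 := by
    rw [Matrix.det_fin_two, hconj]
  have hbsq : ‖ρ 1 0‖ ^ 2 ≤ (ρ 0 0).re * (ρ 1 1).re := by
    have h1 : (ρ.det).re = (ρ 0 0).re * (ρ 1 1).re - ‖ρ 1 0‖ ^ 2 := by
      rw [hdet2]
      have : (star (ρ 1 0) * ρ 1 0) = (Complex.normSq (ρ 1 0) : ℂ) := by
        simpa [mul_comm] using Complex.mul_conj (ρ 1 0)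
      rw [this]
      simp [Complex.sub_re, Complex.mul_re, haim, hdim, Complex.sq_norm]
    nlinarith [hdetre]
  -- value of P
  have hPz : (sigmaZ * ρ).trace = (((ρ 0 0).re - (ρ 1 1).re : ℝ) : ℂ) := by
    have : (sigmaZ * ρ).trace = ρ 0 0 - ρ 1 1 := by
      simp [sigmaZ, Matrix.trace_fin_two, Matrix.mul_apply, Fin.sum_univ_two,
        Matrix.vecMul, dotProduct]
      ring
    rw [this]
    apply Complex.ext <;> simp [haim, hdim]
  have hP : ‖(sigmaZ * ρ).trace‖ = |(ρ 0 0).re - (ρ 1 1).re| := by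
    rw [hPz, Complex.norm_real, Real.norm_eq_abs]
  -- trace of σW φ ρ
  have hTrW : ∀ φ : ℝ, (sigmaW φ * ρ).trace
      = Complex.exp (-(Complex.I * φ)) * ρ 1 0 + Complex.exp (Complex.I * φ) * ρ 0 1 := by
    intro φ
    simp [sigmaW, Matrix.trace_fin_two, Matrix.mul_apply, Fin.sum_univ_two,
      Matrix.vecMul, dotProduct]
  -- the supremum equals 2|ρ 1 0|
  set S : Set ℝ := {x : ℝ | ∃ φ : ℝ, x = ‖(sigmaW φ * ρ).trace‖} with hS
  have habsexp : ∀ φ : ℝ, ‖Complex.exp (Complex.I * φ)‖ = 1 := by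
    intro φ; simp [Complex.norm_exp]
  have hbound : ∀ x ∈ S, x ≤ 2 * ‖ρ 1 0‖ := by
    rintro x ⟨φ, rfl⟩
    rw [hTrW φ, hconj]
    calc ‖Complex.exp (-(Complex.I * φ)) * ρ 1 0
            + Complex.exp (Complex.I * φ) * star (ρ 1 0)‖
        ≤ ‖Complex.exp (-(Complex.I * φ)) * ρ 1 0‖
            + ‖Complex.exp (Complex.I * φ) * star (ρ 1 0)‖ :=
          norm_add_le _ _
      _ = ‖ρ 1 0‖ + ‖ρ 1 0‖ := by
          simp [Complex.norm_exp]
      _ = 2 * ‖ρ 1 0‖ := by ring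
  have hmem : (2 * ‖ρ 1 0‖) ∈ S := by
    refine ⟨Complex.arg (ρ 1 0), ?_⟩
    have hb : ρ 1 0 = (‖ρ 1 0‖ : ℂ) * Complex.exp (Complex.arg (ρ 1 0) * Complex.I) :=
      (Complex.norm_mul_exp_arg_mul_I (ρ 1 0)).symm
    rw [hTrW, hconj]
    have h1 : Complex.exp (-(Complex.I * ((Complex.arg (ρ 1 0) : ℝ) : ℂ))) * ρ 1 0
        = (‖ρ 1 0‖ : ℂ) := by
      conv_lhs => rw [hb]
      rw [mul_comm (Complex.I) _, ← mul_assoc, mul_comm _ ((‖ρ 1 0‖ : ℂ)), mul_assoc,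
        ← Complex.exp_add]
      simp
    have hstar : star (ρ 1 0)
        = (‖ρ 1 0‖ : ℂ) * Complex.exp (-(Complex.I * (((ρ 1 0).arg : ℝ) : ℂ))) := by
      conv_lhs => rw [hb]
      rw [star_mul', Complex.star_def, ← Complex.exp_conj]
      rw [Complex.conj_ofReal]
      ring_nf
      rw [map_mul, Complex.conj_I, Complex.conj_ofReal]
      ring_nf
    have h2 : Complex.exp (Complex.I * ((Complex.arg (ρ 1 0) : ℝ) : ℂ)) * star (ρ 1 0)
        = (‖ρ 1 0‖ : ℂ) := by
      rw [hstar, ← mul_assoc, mul_comm (Complex.exp _) ((‖ρ 1 0‖ : ℂ)), mul_assoc,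
        ← Complex.exp_add]
      simp
    rw [h1, h2]
    rw [← Complex.ofReal_add, Complex.norm_real, Real.norm_eq_abs]
    rw [abs_of_nonneg (by positivity)]
    ring
  have hVS : sSup S = 2 * ‖ρ 1 0‖ := by
    apply le_antisymm
    · exact csSup_le ⟨_, hmem⟩ hbound
    · exact le_csSup ⟨_, hbound⟩ hmem
  -- the key inequality P² + V² ≤ 1
  have hkey : ‖(sigmaZ * ρ).trace‖ ^ 2 + (sSup S) ^ 2 ≤ 1 := by
    rw [hVS, hP]
    have h1 : |(ρ 0 0).re - (ρ 1 1).re| ^ 2 = ((ρ 0 0).re - (ρ 1 1).re) ^ 2 := sq_abs _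
    nlinarith [hbsq, sq_abs ((ρ 0 0).re - (ρ 1 1).re)]
  constructor
  · intro _; exact hkey
  · intro _
    set P := ‖(sigmaZ * ρ).trace‖ with hPdef
    set V := sSup S with hVdef
    have hP0 : 0 ≤ P := norm_nonneg _
    have hV0 : 0 ≤ V := by rw [hVS]; positivity
    have hPV : P ^ 2 ≤ 1 - V ^ 2 := by linarith [hkey]
    have h1V : 0 ≤ 1 - V ^ 2 := by nlinarith
    have hPle : P ≤ Real.sqrt (1 - V ^ 2) := (Real.le_sqrt hP0 h1V).mpr hPV
    have hlog : Real.logb 2 ((1 + P) / 2) = Real.logb 2 (1 + P) - 1 := by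
      rw [Real.logb_div (by positivity) (by norm_num), Real.logb_self_eq_one (by norm_num)]
    rw [hlog]
    have hmono : Real.logb 2 (1 + P) ≤ Real.logb 2 (1 + Real.sqrt (1 - V ^ 2)) :=
      Real.logb_le_logb_of_le (by norm_num) (by positivity) (by linarith)
    linarith
end

section
/- The function transformation identity: −log((1+D)/2) + log(1 + √(1−V²)) ≥ 1 (log base 2) holds for D, V ∈ [0,1] if and only if D² + V² ≤ 1. -/
/-- Arithmetic equivalence underlying WPDR ↔ EUR: for D, V ∈ [0,1],
−log₂((1+D)/2) + log₂(1+√(1−V²)) ≥ 1 ↔ D² + V² ≤ 1. -/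
theorem entropic_wpdr_equiv (D V : ℝ) (hD : D ∈ Set.Icc (0 : ℝ) 1)
    (hV : V ∈ Set.Icc (0 : ℝ) 1) :
    (-Real.logb 2 ((1 + D) / 2) + Real.logb 2 (1 + Real.sqrt (1 - V ^ 2)) ≥ 1)
      ↔ D ^ 2 + V ^ 2 ≤ 1 := by
  obtain ⟨hD0, hD1⟩ := hD
  obtain ⟨hV0, hV1⟩ := hV
  have hs0 : (0:ℝ) ≤ Real.sqrt (1 - V ^ 2) := Real.sqrt_nonneg _
  have hx : (0:ℝ) < (1 + D) / 2 := by linarith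
  have hy : (0:ℝ) < 1 + Real.sqrt (1 - V ^ 2) := by linarith
  have h2 : (1:ℝ) < 2 := one_lt_two
  have key : (-Real.logb 2 ((1 + D) / 2) + Real.logb 2 (1 + Real.sqrt (1 - V ^ 2)) ≥ 1)
      ↔ 1 + D ≤ 1 + Real.sqrt (1 - V ^ 2) := by
    rw [ge_iff_le, neg_add_eq_sub, le_sub_iff_add_le]
    have h1 : (1:ℝ) + Real.logb 2 ((1 + D) / 2) = Real.logb 2 (1 + D) := by
      rw [Real.logb_div (by linarith) two_ne_zero, Real.logb_self_eq_one h2]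
      linarith
    rw [h1, Real.logb_le_logb h2 (by linarith) hy]
  rw [key, add_le_add_iff_left]
  constructor
  · intro h
    have := (Real.le_sqrt hD0 (by nlinarith)).mp h
    nlinarith
  · intro h
    rw [Real.le_sqrt hD0 (by nlinarith)]
    nlinarith
end

section
/- Commutation of phase rotations with path-preserving qubit channels: let 𝒬 be a qubit quantum channel with 𝒬(|0⟩⟨0|) = |0⟩⟨0| and 𝒬(|1⟩⟨1|) = |1⟩⟨1|, and let ℛ_φ(·) = U_φ (·) U_φ† with U_φ = |0⟩⟨0| + e^{iφ}|1⟩⟨1|. Then ℛ_φ ∘ 𝒬 = 𝒬 ∘ ℛ_φ for all φ. -/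
open Matrix

/-- A qubit CPTP map, presented through a Kraus decomposition (Choi's theorem). -/
def IsCPTP (Q : Matrix (Fin 2) (Fin 2) ℂ →ₗ[ℂ] Matrix (Fin 2) (Fin 2) ℂ) : Prop :=
  ∃ (m : ℕ) (K : Fin m → Matrix (Fin 2) (Fin 2) ℂ),
    (∀ A, Q A = ∑ i, K i * A * (K i)ᴴ) ∧ (∑ i, (K i)ᴴ * K i = 1)

/-- The phase unitary U_φ = |0⟩⟨0| + e^{iφ}|1⟩⟨1|. -/
noncomputable def Uphase (φ : ℝ) : Matrix (Fin 2) (Fin 2) ℂ :=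
  !![1, 0; 0, Complex.exp (Complex.I * φ)]

lemma sum_normSq_zero {m : ℕ} (f : Fin m → ℂ)
    (h : ∑ i, f i * (starRingEnd ℂ) (f i) = 0) : ∀ i, f i = 0 := by
  have h2 : ∑ i, Complex.normSq (f i) = 0 := by
    have := congrArg Complex.re h
    simpa [Complex.mul_conj] using this
  intro i
  have := (Finset.sum_eq_zero_iff_of_nonneg (fun j _ => Complex.normSq_nonneg (f j))).mp h2
    i (Finset.mem_univ i)
  exact Complex.normSq_eq_zero.mp this

lemma diag_comm_Uphase (K : Matrix (Fin 2) (Fin 2) ℂ) (φ : ℝ)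
    (h01 : K 0 1 = 0) (h10 : K 1 0 = 0) :
    K * Uphase φ = Uphase φ * K := by
  ext i j
  fin_cases i <;> fin_cases j <;>
    simp [Uphase, Matrix.mul_apply, Fin.sum_univ_two, h01, h10] <;> ring

/-- A qubit channel fixing both computational basis projectors commutes with
every phase rotation ℛ_φ(·) = U_φ(·)U_φ†. -/
theorem channel_commutes_with_phase
    (Q : Matrix (Fin 2) (Fin 2) ℂ →ₗ[ℂ] Matrix (Fin 2) (Fin 2) ℂ)
    (hQ : IsCPTP Q)
    (h0 : Q !![1, 0; 0, 0] = !![1, 0; 0, 0])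
    (h1 : Q !![0, 0; 0, 1] = !![0, 0; 0, 1])
    (φ : ℝ) (A : Matrix (Fin 2) (Fin 2) ℂ) :
    Uphase φ * Q A * (Uphase φ)ᴴ = Q (Uphase φ * A * (Uphase φ)ᴴ) := by
  obtain ⟨m, K, hK, -⟩ := hQ
  have h10 : ∀ i, K i 1 0 = 0 := by
    apply sum_normSq_zero
    have hs : (∑ i, K i * ((!![1,0;0,0]) : Matrix (Fin 2) (Fin 2) ℂ) * (K i)ᴴ) 1 1 = (0 : ℂ) := by
      rw [← hK, h0]; norm_num
    rw [Matrix.sum_apply] at hs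
    rw [← hs]
    apply Finset.sum_congr rfl
    intro i _
    simp [Matrix.mul_apply, Fin.sum_univ_two, Matrix.conjTranspose_apply]
  have h01 : ∀ i, K i 0 1 = 0 := by
    apply sum_normSq_zero
    have hs : (∑ i, K i * ((!![0,0;0,1]) : Matrix (Fin 2) (Fin 2) ℂ) * (K i)ᴴ) 0 0 = (0 : ℂ) := by
      rw [← hK, h1]; norm_num
    rw [Matrix.sum_apply] at hs
    rw [← hs]
    apply Finset.sum_congr rfl
    intro i _
    simp [Matrix.mul_apply, Fin.sum_univ_two, Matrix.conjTranspose_apply]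
  have hcomm : ∀ i, K i * Uphase φ = Uphase φ * K i :=
    fun i => diag_comm_Uphase (K i) φ (h01 i) (h10 i)
  have hcommH : ∀ i, (Uphase φ)ᴴ * (K i)ᴴ = (K i)ᴴ * (Uphase φ)ᴴ := by
    intro i
    have := congrArg Matrix.conjTranspose (hcomm i)
    simpa [Matrix.conjTranspose_mul] using this
  rw [hK, hK]
  rw [Matrix.mul_sum, Finset.sum_mul]
  apply Finset.sum_congr rfl
  intro i _
  calc Uphase φ * (K i * A * (K i)ᴴ) * (Uphase φ)ᴴ
      = (Uphase φ * K i) * A * ((K i)ᴴ * (Uphase φ)ᴴ) := by simp only [mul_assoc]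
    _ = (K i * Uphase φ) * A * ((Uphase φ)ᴴ * (K i)ᴴ) := by rw [hcomm, hcommH]
    _ = K i * (Uphase φ * A * (Uphase φ)ᴴ) * (K i)ᴴ := by simp only [mul_assoc]
end
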